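/- arXiv:math/0402316 — 2 statements merged into one kernel-verified Lean document; each statement's English description precedes it below -/
import Mathlib

section
/- Let (X, μ) be a finite measure space, let φ be a measurable real function, and suppose there exist α ∈ (0,1) and C₃ > 0 such that ∫ exp(−α(φ − sup φ)) dμ ≤ C₃, and moreover ∫ exp(f − φ) dμ = 1 for a bounded measurable function f, where μ(X) = 1. Then for any β > 0, setting p = 1 + (1−α)/β and p' its Hölder conjugate, one has log ∫ exp(−(1+β)φ) dμ ≥ (αβ/(1−α))·sup φ − (p'·sup f + C₃/(p−1)). -/
open MeasureTheory

private lemma exp_bdd_integrable {X : Type*} [MeasurableSpace X] (μ : Measure X)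
    [IsFiniteMeasure μ] {ψ : X → ℝ} (hm : Measurable ψ) {B : ℝ} (hb : ∀ x, |ψ x| ≤ B) :
    Integrable (fun x => Real.exp (ψ x)) μ := by
  refine ⟨hm.exp.aestronglyMeasurable, HasFiniteIntegral.of_bounded
    (C := Real.exp B) (Filter.Eventually.of_forall fun x => ?_)⟩
  rw [Real.norm_eq_abs, abs_of_pos (Real.exp_pos _)]
  exact Real.exp_le_exp.2 (abs_le.1 (hb x)).2

private lemma exp_bdd_memLp {X : Type*} [MeasurableSpace X] (μ : Measure X)
    [IsFiniteMeasure μ] {ψ : X → ℝ} (hm : Measurable ψ) {B : ℝ} (hb : ∀ x, |ψ x| ≤ B)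
    (r : ENNReal) : MemLp (fun x => Real.exp (ψ x)) r μ := by
  refine MemLp.of_bound hm.exp.aestronglyMeasurable (Real.exp B)
    (Filter.Eventually.of_forall fun x => ?_)
  rw [Real.norm_eq_abs, abs_of_pos (Real.exp_pos _)]
  exact Real.exp_le_exp.2 (abs_le.1 (hb x)).2

theorem stmt_4 {X : Type*} [MeasurableSpace X] [Nonempty X]
    (μ : Measure X) [IsProbabilityMeasure μ]
    (φ f : X → ℝ) (hφm : Measurable φ) (hfm : Measurable f)
    (hφb : ∃ B, ∀ x, |φ x| ≤ B) (hfb : ∃ B, ∀ x, |f x| ≤ B)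
    (α β C₃ : ℝ) (hα : α ∈ Set.Ioo (0:ℝ) 1) (hβ : 0 < β) (hC₃ : 0 < C₃)
    (halpha : ∫ x, Real.exp (-α * (φ x - ⨆ y, φ y)) ∂μ ≤ C₃)
    (hnorm : ∫ x, Real.exp (f x - φ x) ∂μ = 1)
    (p p' : ℝ) (hp : p = 1 + (1 - α) / β) (hp' : p' = p / (p - 1)) :
    Real.log (∫ x, Real.exp (-(1 + β) * φ x) ∂μ)
      ≥ (α * β / (1 - α)) * (⨆ y, φ y) - (p' * (⨆ y, f y) + C₃ / (p - 1)) := by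
  obtain ⟨hα0, hα1⟩ := hα
  obtain ⟨Bφ, hBφ⟩ := hφb
  obtain ⟨Bf, hBf⟩ := hfb
  set S := ⨆ y, φ y with hS
  set F := ⨆ y, f y with hF
  have h1α : (0:ℝ) < 1 - α := by linarith
  have hd : (0:ℝ) < 1 + β - α := by linarith
  set θ : ℝ := (1 - α) / (1 + β - α) with hθdef
  have hθ0 : 0 < θ := div_pos h1α hd
  have hθ1 : θ < 1 := (div_lt_one hd).2 (by linarith)
  have hθd : θ * (1 + β - α) = 1 - α := by rw [hθdef]; field_simp
  -- suprema bounds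
  have hφS : ∀ x, φ x ≤ S := fun x =>
    le_ciSup ⟨Bφ, by rintro _ ⟨y, rfl⟩; exact (abs_le.1 (hBφ y)).2⟩ x
  have hfF : ∀ x, f x ≤ F := fun x =>
    le_ciSup ⟨Bf, by rintro _ ⟨y, rfl⟩; exact (abs_le.1 (hBf y)).2⟩ x
  -- integrals
  set A := ∫ x, Real.exp (-(1 + β) * φ x) ∂μ with hA
  set Bi := ∫ x, Real.exp (-α * φ x) ∂μ with hBi
  set D := ∫ x, Real.exp (-φ x) ∂μ with hD
  have bA : ∀ x, |(-(1+β)) * φ x| ≤ (1+β) * Bφ := by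
    intro x
    rw [abs_mul, abs_neg, abs_of_pos (by linarith : (0:ℝ) < 1+β)]
    exact mul_le_mul_of_nonneg_left (hBφ x) (by linarith)
  have bB : ∀ x, |(-α) * φ x| ≤ α * Bφ := by
    intro x
    rw [abs_mul, abs_neg, abs_of_pos hα0]
    exact mul_le_mul_of_nonneg_left (hBφ x) hα0.le
  have iA : Integrable (fun x => Real.exp (-(1 + β) * φ x)) μ :=
    exp_bdd_integrable μ (by fun_prop) bA
  have iB : Integrable (fun x => Real.exp (-α * φ x)) μ :=
    exp_bdd_integrable μ (by fun_prop) bB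
  have hApos : 0 < A := integral_exp_pos iA
  have hBpos : 0 < Bi := integral_exp_pos iB
  -- Step 1: D ≥ exp(-F)
  have hDge : Real.exp (-F) ≤ D := by
    have hmono : ∫ x, Real.exp (f x - φ x) ∂μ ≤ ∫ x, Real.exp (F - φ x) ∂μ := by
      refine integral_mono
        (exp_bdd_integrable μ (by fun_prop) (B := Bf + Bφ) fun x => by
          calc |f x - φ x| ≤ |f x| + |φ x| := abs_sub _ _
          _ ≤ Bf + Bφ := by linarith [hBf x, hBφ x])
        (exp_bdd_integrable μ (by fun_prop) (B := |F| + Bφ) fun x => by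
          calc |F - φ x| ≤ |F| + |φ x| := abs_sub _ _
          _ ≤ |F| + Bφ := by linarith [hBφ x])
        fun x => Real.exp_le_exp.2 (by linarith [hfF x])
    rw [hnorm] at hmono
    have heq : ∫ x, Real.exp (F - φ x) ∂μ = Real.exp F * D := by
      rw [hD, ← integral_const_mul]
      congr 1; funext x; rw [← Real.exp_add]; ring_nf
    rw [heq] at hmono
    have h2 : 1 / Real.exp F ≤ D := (div_le_iff₀' (Real.exp_pos F)).2 hmono
    rwa [Real.exp_neg, inv_eq_one_div]
  -- Step 2: Bi ≤ C₃ * exp(-(α*S))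
  have hBle : Bi ≤ C₃ * Real.exp (-(α * S)) := by
    have heq : ∫ x, Real.exp (-α * (φ x - S)) ∂μ = Real.exp (α * S) * Bi := by
      rw [hBi, ← integral_const_mul]
      congr 1; funext x; rw [← Real.exp_add]; ring_nf
    rw [heq] at halpha
    have h2 : Bi ≤ C₃ / Real.exp (α * S) := (le_div_iff₀' (Real.exp_pos _)).2 halpha
    rwa [Real.exp_neg, ← div_eq_mul_inv]
  -- Step 3: Hölder
  have hconj : Real.HolderConjugate (1/θ) (1/(1-θ)) := by
    rw [Real.holderConjugate_iff]
    constructor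
    · exact one_lt_one_div hθ0 hθ1
    · rw [one_div, one_div, inv_inv, inv_inv]; ring
  have hHolder : D ≤ A ^ θ * Bi ^ (1 - θ) := by
    set u : X → ℝ := fun x => Real.exp (θ * (-(1+β)) * φ x) with hu
    set v : X → ℝ := fun x => Real.exp ((1-θ) * (-α) * φ x) with hv
    have bu : ∀ x, |θ * (-(1+β)) * φ x| ≤ |θ * (-(1+β))| * Bφ := fun x => by
      rw [abs_mul]; exact mul_le_mul_of_nonneg_left (hBφ x) (abs_nonneg _)
    have bv : ∀ x, |(1-θ) * (-α) * φ x| ≤ |(1-θ) * (-α)| * Bφ := fun x => by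
      rw [abs_mul]; exact mul_le_mul_of_nonneg_left (hBφ x) (abs_nonneg _)
    have key := integral_mul_le_Lp_mul_Lq_of_nonneg hconj
      (f := u) (g := v)
      (Filter.Eventually.of_forall fun x => (Real.exp_pos _).le)
      (Filter.Eventually.of_forall fun x => (Real.exp_pos _).le)
      (exp_bdd_memLp μ (by fun_prop) bu _)
      (exp_bdd_memLp μ (by fun_prop) bv _)
    have huv : ∀ x, u x * v x = Real.exp (-φ x) := fun x => by
      rw [hu, hv]; dsimp only; rw [← Real.exp_add]
      congr 1
      have : θ * (-(1+β)) * φ x + (1-θ) * (-α) * φ x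
          = -(θ * (1 + β - α) + α) * φ x := by ring
      rw [this, hθd]; ring
    have hθne : θ ≠ 0 := ne_of_gt hθ0
    have h1θne : (1:ℝ) - θ ≠ 0 := ne_of_gt (by linarith)
    have hup : ∀ x, u x ^ (1/θ) = Real.exp (-(1+β) * φ x) := fun x => by
      rw [hu]; dsimp only; rw [← Real.exp_mul]
      congr 1
      have h : θ * -(1+β) * φ x * (1/θ) = (θ * (1/θ)) * (-(1+β) * φ x) := by ring
      rw [h, one_div, mul_inv_cancel₀ hθne, one_mul]
    have hvp : ∀ x, v x ^ (1/(1-θ)) = Real.exp (-α * φ x) := fun x => by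
      rw [hv]; dsimp only; rw [← Real.exp_mul]
      congr 1
      have h : (1-θ) * -α * φ x * (1/(1-θ)) = ((1-θ) * (1/(1-θ))) * (-α * φ x) := by ring
      rw [h, one_div, mul_inv_cancel₀ h1θne, one_mul]
    have e1 : ∫ x, u x * v x ∂μ = D := by
      rw [hD]
      apply integral_congr_ae
      filter_upwards with x
      exact huv x
    have e2 : ∫ x, u x ^ (1/θ) ∂μ = A := by
      rw [hA]
      apply integral_congr_ae
      filter_upwards with x
      exact hup x
    have e3 : ∫ x, v x ^ (1/(1-θ)) ∂μ = Bi := by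
      rw [hBi]
      apply integral_congr_ae
      filter_upwards with x
      exact hvp x
    rw [e1, e2, e3] at key
    rwa [one_div_one_div, one_div_one_div] at key
  -- Step 4: chain and take logs
  have hC₃e : 0 < C₃ * Real.exp (-(α * S)) := mul_pos hC₃ (Real.exp_pos _)
  have hchain : Real.exp (-F) ≤ A ^ θ * (C₃ * Real.exp (-(α * S))) ^ (1 - θ) := by
    refine hDge.trans (hHolder.trans ?_)
    exact mul_le_mul_of_nonneg_left
      (Real.rpow_le_rpow hBpos.le hBle (by linarith)) (Real.rpow_nonneg hApos.le _)
  have hlog : -F ≤ θ * Real.log A + (1-θ) * (Real.log C₃ + (-(α * S))) := by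
    have := Real.log_le_log (Real.exp_pos _) hchain
    rwa [Real.log_exp, Real.log_mul (by positivity) (by positivity),
      Real.log_rpow hApos, Real.log_rpow hC₃e,
      Real.log_mul (ne_of_gt hC₃) (Real.exp_ne_zero _), Real.log_exp] at this
  -- Step 5: arithmetic
  have hlogC : Real.log C₃ ≤ C₃ := (Real.log_le_sub_one_of_pos hC₃).trans (by linarith)
  have hp1 : p - 1 = (1 - α) / β := by rw [hp]; ring
  have hp'eq : p' = (1 + β - α) / (1 - α) := by
    rw [hp', hp1, hp]; field_simp; ring
  have htarget : α * β / (1 - α) * S - (p' * F + C₃ / (p - 1))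
      = (α * β * S - (1 + β - α) * F - β * C₃) / (1 - α) := by
    rw [hp'eq, hp1]
    field_simp
    ring
  rw [ge_iff_le, htarget, div_le_iff₀ h1α]
  -- multiply hlog by (1+β-α)
  have hlog' := mul_le_mul_of_nonneg_left hlog hd.le
  have hθd' : (1 + β - α) * (1 - θ) = β := by
    have : (1+β-α) * (1-θ) = (1+β-α) - θ*(1+β-α) := by ring
    rw [this, hθd]; ring
  have hθd'' : (1 + β - α) * θ = 1 - α := by rw [mul_comm]; exact hθd
  have hexp : (1+β-α) * (θ * Real.log A + (1-θ) * (Real.log C₃ + -(α*S)))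
      = (1-α) * Real.log A + β * (Real.log C₃ - α*S) := by
    rw [mul_add, ← mul_assoc, hθd'', ← mul_assoc, hθd']; ring
  rw [hexp] at hlog'
  have hC : β * Real.log C₃ ≤ β * C₃ := mul_le_mul_of_nonneg_left hlogC hβ.le
  nlinarith [hlog', hC]
end

section
/- Let m₁, ..., m_k be positive integers and λ a positive real with λ < 1/m₁ + ... + 1/m_k. Then the integral over the unit polydisk Δ^k ⊂ ℂ^k of (|z₁|^{m₁} + ... + |z_k|^{m_k})^{−2λ} with respect to Lebesgue measure is finite. -/
open MeasureTheory Set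

lemma aux_real {β : ℝ} (hβ0 : 0 < β) (hβ : β < 1) :
    IntegrableOn (fun x : ℝ => |x| ^ (-β)) (Ioo (-1 : ℝ) 1) volume := by
  have hpos : IntegrableOn (fun x : ℝ => |x| ^ (-β)) (Ioo (0:ℝ) 1) volume := by
    have h : IntegrableOn (fun x : ℝ => x ^ (-β)) (Ioo (0:ℝ) 1) volume :=
      (intervalIntegral.integrableOn_Ioo_rpow_iff one_pos).mpr (by linarith)
    exact h.congr_fun (fun x hx => by rw [abs_of_pos hx.1]) measurableSet_Ioo
  have hneg : IntegrableOn (fun x : ℝ => |x| ^ (-β)) (Ioo (-1:ℝ) 0) volume := by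
    have hmp : MeasurePreserving (fun x : ℝ => -x) volume volume :=
      Measure.measurePreserving_neg _
    have hpre : (fun x : ℝ => -x) ⁻¹' (Ioo (-1:ℝ) 0) = Ioo (0:ℝ) 1 := by
      ext x
      simp only [mem_preimage, mem_Ioo]
      constructor
      · rintro ⟨h1, h2⟩; constructor <;> linarith
      · rintro ⟨h1, h2⟩; constructor <;> linarith
    have hmp2 := hmp.restrict_preimage (measurableSet_Ioo (a := (-1:ℝ)) (b := 0))
    rw [hpre] at hmp2
    have hemb : MeasurableEmbedding (fun x : ℝ => -x) :=
      (Homeomorph.neg ℝ).measurableEmbedding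
    have hiff := (hmp2.integrable_comp_emb hemb (g := fun x : ℝ => |x| ^ (-β)))
    refine hiff.mp ?_
    have : ((fun x : ℝ => |x| ^ (-β)) ∘ (fun x : ℝ => -x)) = fun x : ℝ => |x| ^ (-β) := by
      funext x; simp [abs_neg]
    rw [this]
    exact hpos
  have hzero : IntegrableOn (fun x : ℝ => |x| ^ (-β)) ({0} : Set ℝ) volume := by
    rw [IntegrableOn, Measure.restrict_eq_zero.mpr (by simp)]
    exact integrable_zero_measure
  have hsub : Ioo (-1:ℝ) 1 ⊆ (Ioo (-1:ℝ) 0 ∪ {0}) ∪ Ioo (0:ℝ) 1 := by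
    intro x hx
    rcases lt_trichotomy x 0 with h | h | h
    · exact Or.inl (Or.inl ⟨hx.1, h⟩)
    · exact Or.inl (Or.inr (by simp [h]))
    · exact Or.inr ⟨h, hx.2⟩
  exact ((hneg.union hzero).union hpos).mono_set hsub

lemma aux_c {β : ℝ} (hβ0 : 0 < β) (hβ : β < 1) :
    IntegrableOn (fun w : ℂ => |w.re| ^ (-β) * |w.im| ^ (-β))
      {w : ℂ | |w.re| < 1 ∧ |w.im| < 1} volume := by
  have e := Complex.volume_preserving_equiv_real_prod
  have hsq : {w : ℂ | |w.re| < 1 ∧ |w.im| < 1}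
      = Complex.measurableEquivRealProd ⁻¹' (Ioo (-1:ℝ) 1 ×ˢ Ioo (-1:ℝ) 1) := by
    ext w
    simp [Complex.measurableEquivRealProd_apply, Set.mem_prod, mem_Ioo, abs_lt]
  have h2 : Integrable (fun p : ℝ × ℝ => |p.1| ^ (-β) * |p.2| ^ (-β))
      ((volume.restrict (Ioo (-1:ℝ) 1)).prod (volume.restrict (Ioo (-1:ℝ) 1))) :=
    (aux_real hβ0 hβ).mul_prod (aux_real hβ0 hβ)
  rw [Measure.prod_restrict, ← Measure.volume_eq_prod] at h2
  rw [IntegrableOn, hsq]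
  have hmp := e.restrict_preimage
    ((measurableSet_Ioo.prod measurableSet_Ioo) :
      MeasurableSet (Ioo (-1:ℝ) 1 ×ˢ Ioo (-1:ℝ) 1))
  have hiff := hmp.integrable_comp_emb Complex.measurableEquivRealProd.measurableEmbedding
    (g := fun p : ℝ × ℝ => |p.1| ^ (-β) * |p.2| ^ (-β))
  exact hiff.mpr h2

lemma restrict_pi_eq {k : ℕ} (s : Fin k → Set ℂ) (hs : ∀ i, MeasurableSet (s i)) :
    (volume : Measure (Fin k → ℂ)).restrict (Set.pi Set.univ s)
      = Measure.pi (fun i => volume.restrict (s i)) := by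
  refine (Measure.pi_eq fun t ht => ?_).symm
  rw [Measure.restrict_apply (MeasurableSet.univ_pi ht), ← Set.pi_inter_distrib,
    volume_pi_pi]
  exact Finset.prod_congr rfl fun i _ => (Measure.restrict_apply (ht i)).symm

lemma integrable_pi_prod {n : ℕ} : ∀ (μ : Fin n → Measure ℂ), (∀ i, SigmaFinite (μ i)) →
    ∀ (f : Fin n → ℂ → ℝ), (∀ i, Integrable (f i) (μ i)) →
    Integrable (fun x : Fin n → ℂ => ∏ i, f i (x i)) (Measure.pi μ) := by
  induction n with
  | zero =>
      intro μ hσ f hf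
      have : IsFiniteMeasure (Measure.pi μ) := ⟨by rw [Measure.pi_univ]; simp⟩
      simpa using integrable_const (1 : ℝ)
  | succ n ih =>
      intro μ hσ f hf
      haveI := hσ
      have hmp := (measurePreserving_piFinSuccAbove μ 0).symm
      rw [← hmp.integrable_comp_emb (MeasurableEquiv.measurableEmbedding _)]
      simp_rw [MeasurableEquiv.piFinSuccAbove_symm_apply, Fin.insertNthEquiv,
        Fin.prod_univ_succ, Fin.insertNth_zero]
      simp only [Fin.zero_succAbove, Function.comp_def, Fin.cons_zero, Fin.cons_succ]
      exact Integrable.mul_prod (hf 0) (ih _ (fun j => hσ _) _ (fun j => hf _))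

theorem stmt_7 (k : ℕ) (hk : 1 ≤ k) (m : Fin k → ℕ) (hm : ∀ i, 1 ≤ m i)
    (lam : ℝ) (hl : 0 < lam) (hl2 : lam < ∑ i, (1 : ℝ) / (m i : ℝ)) :
    IntegrableOn
      (fun z : Fin k → ℂ => (∑ i, ‖z i‖ ^ (m i)) ^ (-(2 * lam)))
      {z : Fin k → ℂ | ∀ i, ‖z i‖ < 1} volume := by
  classical
  haveI : Nonempty (Fin k) := ⟨⟨0, hk⟩⟩
  set S : ℝ := ∑ i, (1 : ℝ) / (m i : ℝ) with hS_def
  have hmpos : ∀ i, (0:ℝ) < (m i : ℝ) := fun i => by exact_mod_cast (hm i)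
  have hS : 0 < S := lt_trans hl hl2
  set α : ℝ := 2 * lam / S with hα_def
  have hα0 : 0 < α := by positivity
  have hα2 : α < 2 := by rw [hα_def, div_lt_iff₀ hS]; linarith
  set β : ℝ := α / 2 with hβ_def
  have hβ0 : 0 < β := by positivity
  have hβ1 : β < 1 := by rw [hβ_def]; linarith
  set sq : Set ℂ := {w : ℂ | |w.re| < 1 ∧ |w.im| < 1} with hsq_def
  have hsqm : MeasurableSet sq := by
    have : sq = {w : ℂ | |w.re| < 1} ∩ {w : ℂ | |w.im| < 1} := by
      ext w; simp [hsq_def]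
    rw [this]
    exact (measurableSet_lt Complex.measurable_re.abs measurable_const).inter
      (measurableSet_lt Complex.measurable_im.abs measurable_const)
  set G : (Fin k → ℂ) → ℝ := fun z => ∏ i, (|(z i).re| ^ (-β) * |(z i).im| ^ (-β))
    with hG_def
  have hGint : IntegrableOn G (Set.pi Set.univ (fun _ : Fin k => sq)) volume := by
    rw [IntegrableOn, restrict_pi_eq _ (fun _ => hsqm)]
    exact integrable_pi_prod _ (fun i => inferInstance) _ (fun i => aux_c hβ0 hβ1)
  have hsub : {z : Fin k → ℂ | ∀ i, ‖z i‖ < 1}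
      ⊆ Set.pi Set.univ (fun _ => sq) := by
    intro z hz i _
    exact ⟨lt_of_le_of_lt (Complex.abs_re_le_norm _) (hz i),
      lt_of_le_of_lt (Complex.abs_im_le_norm _) (hz i)⟩
  have hGD : IntegrableOn G {z | ∀ i, ‖z i‖ < 1} volume := hGint.mono_set hsub
  have hD : MeasurableSet {z : Fin k → ℂ | ∀ i, ‖z i‖ < 1} := by
    have : {z : Fin k → ℂ | ∀ i, ‖z i‖ < 1}
        = ⋂ i, {z : Fin k → ℂ | ‖z i‖ < 1} := by ext z; simp
    rw [this]
    exact MeasurableSet.iInter fun i => measurableSet_lt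
      (continuous_norm.measurable.comp (measurable_pi_apply i)) measurable_const
  have hF : Measurable fun z : Fin k → ℂ =>
      (∑ i, ‖z i‖ ^ (m i)) ^ (-(2 * lam)) := by
    have hsum : Measurable fun z : Fin k → ℂ => ∑ i, ‖z i‖ ^ (m i) :=
      Finset.measurable_sum _ fun i _ =>
        (continuous_norm.measurable.comp (measurable_pi_apply i)).pow_const _
    fun_prop
  -- a.e. all coordinates have nonzero real and imaginary parts
  have hnullC : ∀ (A : Set ℂ), MeasurableSet A → (volume : Measure ℂ) A = 0 →
      ∀ i : Fin k, (volume : Measure (Fin k → ℂ)) {z | z i ∈ A} = 0 := by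
    intro A hAm hA i
    have hset : {z : Fin k → ℂ | z i ∈ A}
        = Set.pi Set.univ (fun j => if j = i then A else Set.univ) := by
      ext z
      simp only [Set.mem_pi, Set.mem_univ, forall_true_left, mem_setOf_eq]
      constructor
      · intro h j
        by_cases hj : j = i
        · subst hj; simpa using h
        · simp [hj]
      · intro h
        have := h i
        simpa using this
    rw [hset, volume_pi_pi]
    exact Finset.prod_eq_zero (Finset.mem_univ i) (by simp [hA])
  have hre0 : (volume : Measure ℂ) {w : ℂ | w.re = 0} = 0 := by
    have : {w : ℂ | w.re = 0}
        = Complex.measurableEquivRealProd ⁻¹' (({0} : Set ℝ) ×ˢ (Set.univ : Set ℝ)) := by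
      ext w; simp [eq_comm]
    rw [this, Complex.volume_preserving_equiv_real_prod.measure_preimage
      (((measurableSet_singleton (0:ℝ)).prod MeasurableSet.univ).nullMeasurableSet)]
    rw [Measure.volume_eq_prod, Measure.prod_prod]
    simp
  have him0 : (volume : Measure ℂ) {w : ℂ | w.im = 0} = 0 := by
    have : {w : ℂ | w.im = 0}
        = Complex.measurableEquivRealProd ⁻¹' ((Set.univ : Set ℝ) ×ˢ ({0} : Set ℝ)) := by
      ext w; simp [eq_comm]
    rw [this, Complex.volume_preserving_equiv_real_prod.measure_preimage
      ((MeasurableSet.univ.prod (measurableSet_singleton (0:ℝ))).nullMeasurableSet)]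
    rw [Measure.volume_eq_prod, Measure.prod_prod]
    simp
  have hae : ∀ᵐ z : (Fin k → ℂ) ∂(volume), ∀ i, (z i).re ≠ 0 ∧ (z i).im ≠ 0 := by
    rw [ae_all_iff]
    intro i
    have h1 : ∀ᵐ z : (Fin k → ℂ) ∂volume, (z i).re ≠ 0 := by
      rw [ae_iff]
      simpa using hnullC _ (measurableSet_eq_fun Complex.measurable_re measurable_const) hre0 i
    have h2 : ∀ᵐ z : (Fin k → ℂ) ∂volume, (z i).im ≠ 0 := by
      rw [ae_iff]
      simpa using hnullC _ (measurableSet_eq_fun Complex.measurable_im measurable_const) him0 i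
    filter_upwards [h1, h2] with z hz1 hz2 using ⟨hz1, hz2⟩
  -- key pointwise bound
  have key : ∀ z : Fin k → ℂ, (∀ i, (z i).re ≠ 0 ∧ (z i).im ≠ 0) →
      (∑ i, ‖z i‖ ^ (m i)) ^ (-(2 * lam)) ≤ G z := by
    intro z hz0
    set a : Fin k → ℝ := fun i => ‖z i‖ with ha_def
    have hapos : ∀ i, 0 < a i := by
      intro i
      have hne : (z i) ≠ 0 := fun h => (hz0 i).1 (by simp [h])
      simpa [ha_def] using (norm_pos_iff.mpr hne)
    set b : Fin k → ℝ := fun i => a i ^ (m i) with hb_def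
    have hbpos : ∀ i, 0 < b i := fun i => pow_pos (hapos i) _
    have hssum : 0 < ∑ i, b i := Finset.sum_pos (fun i _ => hbpos i) Finset.univ_nonempty
    set t : Fin k → ℝ := fun i => 1 / ((m i : ℝ) * S) with ht_def
    have htpos : ∀ i, 0 < t i := fun i => by
      have := hmpos i; positivity
    have htsum : ∑ i, t i = 1 := by
      have h1 : ∀ i, t i = (1 / (m i : ℝ)) * (1 / S) := by
        intro i; rw [ht_def]; field_simp
      rw [Finset.sum_congr rfl fun i _ => h1 i, ← Finset.sum_mul, ← hS_def]
      field_simp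
    have step1 : (∏ i, (b i) ^ (t i)) ≤ ∑ i, b i := by
      calc ∏ i, (b i) ^ (t i) ≤ ∏ i, (∑ j, b j) ^ (t i) := by
            apply Finset.prod_le_prod
            · intro i _; positivity
            · intro i _
              exact Real.rpow_le_rpow (hbpos i).le
                (Finset.single_le_sum (fun j _ => (hbpos j).le) (Finset.mem_univ i))
                (htpos i).le
        _ = (∑ i, b i) ^ (∑ i, t i) := (Real.rpow_sum_of_pos hssum t Finset.univ).symm
        _ = ∑ i, b i := by rw [htsum, Real.rpow_one]
    have hPpos : 0 < ∏ i, (b i) ^ (t i) :=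
      Finset.prod_pos fun i _ => Real.rpow_pos_of_pos (hbpos i) _
    have step2 : (∑ i, b i) ^ (-(2*lam)) ≤ (∏ i, (b i) ^ (t i)) ^ (-(2*lam)) :=
      Real.rpow_le_rpow_of_nonpos hPpos step1 (by linarith)
    have step3 : (∏ i, (b i) ^ (t i)) ^ (-(2*lam)) = ∏ i, (a i) ^ (-α) := by
      rw [← Real.finset_prod_rpow _ _ (fun i _ => (Real.rpow_pos_of_pos (hbpos i) _).le) _]
      refine Finset.prod_congr rfl fun i _ => ?_
      simp only [hb_def]
      rw [← Real.rpow_natCast (a i) (m i), ← Real.rpow_mul (hapos i).le,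
        ← Real.rpow_mul (hapos i).le]
      congr 1
      have hmne : (m i : ℝ) ≠ 0 := (hmpos i).ne'
      rw [ht_def, hα_def]
      field_simp
    have step4 : ∀ i, (a i) ^ (-α) ≤ |(z i).re| ^ (-β) * |(z i).im| ^ (-β) := by
      intro i
      have hre : 0 < |(z i).re| := abs_pos.mpr (hz0 i).1
      have him : 0 < |(z i).im| := abs_pos.mpr (hz0 i).2
      have h1 : |(z i).re| * |(z i).im| ≤ (a i) ^ (2:ℕ) := by
        have hsq : (a i) ^ (2:ℕ) = (z i).re ^ 2 + (z i).im ^ 2 := by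
          rw [ha_def]
          rw [Complex.sq_norm, Complex.normSq_apply]; ring
        nlinarith [sq_nonneg (|(z i).re| - |(z i).im|), sq_abs ((z i).re),
          sq_abs ((z i).im), abs_nonneg ((z i).re), abs_nonneg ((z i).im)]
      calc (a i) ^ (-α) = ((a i) ^ (2:ℕ)) ^ (-β) := by
            rw [← Real.rpow_natCast (a i) 2, ← Real.rpow_mul (hapos i).le, hβ_def]
            congr 1
            ring
        _ ≤ (|(z i).re| * |(z i).im|) ^ (-β) :=
            Real.rpow_le_rpow_of_nonpos (mul_pos hre him) h1 (neg_nonpos.mpr hβ0.le)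
        _ = |(z i).re| ^ (-β) * |(z i).im| ^ (-β) := Real.mul_rpow hre.le him.le
    calc (∑ i, ‖z i‖ ^ (m i)) ^ (-(2 * lam))
        ≤ ∏ i, (a i) ^ (-α) := step2.trans_eq step3
      _ ≤ G z := by
          rw [hG_def]
          exact Finset.prod_le_prod (fun i _ => (Real.rpow_pos_of_pos (hapos i) _).le)
            (fun i _ => step4 i)
  rw [IntegrableOn]
  refine Integrable.mono' hGD hF.aestronglyMeasurable ?_
  have h2 := ae_restrict_of_ae (s := {z : Fin k → ℂ | ∀ i, ‖z i‖ < 1}) hae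
  filter_upwards [h2] with z hz0
  rw [Real.norm_eq_abs, abs_of_nonneg (Real.rpow_nonneg
    (Finset.sum_nonneg fun i _ => pow_nonneg (norm_nonneg _) _) _)]
  exact key z hz0
end
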